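/- Let (a_{kn})_{k,n≥1} be a Köthe matrix with all a_{kn} > 0 and a_{k+1,n} ≥ a_{kn}, let (r_k) be positive reals with r_k < r_{k+1}, and define b_n = max_{1≤k≤n} 2^{-k} r_k^{-1} a_{kn}. Then for every scalar sequence (x_n): Σ_{n=1}^∞ b_n |x_n| ≤ sup_{k∈ℕ} ( r_k^{-1} Σ_{n=1}^∞ a_{kn} |x_n| ), where both sides may be +∞. -/

import Mathlib

open scoped ENNReal NNReal BigOperators

lemma pow_half_ofReal (k : ℕ) :
    ENNReal.ofReal ((2 : ℝ) ^ (-((k : ℤ) + 1))) = (2⁻¹ : ℝ≥0∞) ^ (k + 1) := by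
  have : (2 : ℝ) ^ (-((k : ℤ) + 1)) = ((2 : ℝ)⁻¹) ^ (k + 1) := by
    rw [inv_pow, ← zpow_natCast]
    rw [← zpow_neg]
    push_cast
    ring_nf
  rw [this, ENNReal.ofReal_pow (by norm_num)]
  congr 1
  rw [ENNReal.ofReal_inv_of_pos (by norm_num), ENNReal.ofReal_ofNat]

theorem stmt_15 (a : ℕ → ℕ → ℝ) (ha : ∀ k n, 0 < a k n)
    (hamono : ∀ k n, a k n ≤ a (k + 1) n)
    (r : ℕ → ℝ) (hr : ∀ k, 0 < r k) (hrmono : ∀ k, r k < r (k + 1))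
    (b : ℕ → ℝ)
    (hb : ∀ n, b n = (Finset.range (n + 1)).sup' Finset.nonempty_range_add_one
        (fun k => (2 : ℝ) ^ (-((k : ℤ) + 1)) * (r k)⁻¹ * a k n))
    (x : ℕ → ℝ) :
    ∑' n : ℕ, ENNReal.ofReal (b n * |x n|)
      ≤ ⨆ k : ℕ, ENNReal.ofReal ((r k)⁻¹) * ∑' n : ℕ, ENNReal.ofReal (a k n * |x n|) := by
  set S := ⨆ k : ℕ, ENNReal.ofReal ((r k)⁻¹) * ∑' n : ℕ, ENNReal.ofReal (a k n * |x n|) with hS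
  have key : ∀ n, ENNReal.ofReal (b n * |x n|)
      ≤ ∑' k : ℕ, (2⁻¹ : ℝ≥0∞) ^ (k + 1) *
          (ENNReal.ofReal ((r k)⁻¹) * ENNReal.ofReal (a k n * |x n|)) := by
    intro n
    obtain ⟨k0, hk0mem, hk0⟩ := Finset.exists_mem_eq_sup' (Finset.nonempty_range_add_one (n := n))
      (fun k => (2 : ℝ) ^ (-((k : ℤ) + 1)) * (r k)⁻¹ * a k n)
    have heq : ENNReal.ofReal (b n * |x n|)
        = (2⁻¹ : ℝ≥0∞) ^ (k0 + 1) *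
          (ENNReal.ofReal ((r k0)⁻¹) * ENNReal.ofReal (a k0 n * |x n|)) := by
      rw [hb n, hk0]
      rw [show (2 : ℝ) ^ (-((k0 : ℤ) + 1)) * (r k0)⁻¹ * a k0 n * |x n|
          = (2 : ℝ) ^ (-((k0 : ℤ) + 1)) * ((r k0)⁻¹ * (a k0 n * |x n|)) by ring]
      rw [ENNReal.ofReal_mul (by positivity),
        ENNReal.ofReal_mul (inv_nonneg.2 (hr k0).le), pow_half_ofReal]
    rw [heq]
    exact ENNReal.le_tsum k0
  calc ∑' n : ℕ, ENNReal.ofReal (b n * |x n|)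
      ≤ ∑' n : ℕ, ∑' k : ℕ, (2⁻¹ : ℝ≥0∞) ^ (k + 1) *
          (ENNReal.ofReal ((r k)⁻¹) * ENNReal.ofReal (a k n * |x n|)) :=
        ENNReal.tsum_le_tsum key
    _ = ∑' k : ℕ, ∑' n : ℕ, (2⁻¹ : ℝ≥0∞) ^ (k + 1) *
          (ENNReal.ofReal ((r k)⁻¹) * ENNReal.ofReal (a k n * |x n|)) := ENNReal.tsum_comm
    _ = ∑' k : ℕ, (2⁻¹ : ℝ≥0∞) ^ (k + 1) *
          (ENNReal.ofReal ((r k)⁻¹) * ∑' n : ℕ, ENNReal.ofReal (a k n * |x n|)) := by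
        congr 1; funext k
        rw [ENNReal.tsum_mul_left, ENNReal.tsum_mul_left]
    _ ≤ ∑' k : ℕ, (2⁻¹ : ℝ≥0∞) ^ (k + 1) * S := by
        refine ENNReal.tsum_le_tsum fun k => ?_
        exact mul_le_mul_right (le_iSup (fun k => ENNReal.ofReal ((r k)⁻¹) *
          ∑' n : ℕ, ENNReal.ofReal (a k n * |x n|)) k) _
    _ = (∑' k : ℕ, (2⁻¹ : ℝ≥0∞) ^ (k + 1)) * S := ENNReal.tsum_mul_right
    _ = S := by
        have : (∑' k : ℕ, (2⁻¹ : ℝ≥0∞) ^ (k + 1)) = 1 := by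
          simp only [pow_succ, pow_succ']
          rw [ENNReal.tsum_mul_right, ENNReal.tsum_geometric]
          rw [show (1 : ℝ≥0∞) - 2⁻¹ = 2⁻¹ by
            rw [ENNReal.sub_eq_of_eq_add (by simp)]
            rw [ENNReal.inv_two_add_inv_two]]
          rw [ENNReal.inv_mul_cancel (by simp) (by simp)]
        rw [this, one_mul]
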